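/- Let η ∈ (0,1), ℓ, m, N ∈ ℕ with m ≥ 2/η, and δ = 2^{−ℓmN}. Let B′ ⊂ [0,1) be a δ-set which is (m, ℓN)-uniform and (η/2, ℓm, N)-polarised. Then there exists a subset B″ ⊂ B′ which is (m, ℓN)-uniform and (η, ℓm, N)-polarised, with |B″| ≥ δ^{η/2} |B′|, and which satisfies the following separation property: for every s ∈ {0,…,ℓN−1}, if I₁ ≠ I₂ are distinct dyadic intervals of length 2^{−ms} intersecting B″, then dist(I₁, I₂) ≥ 2^{−ms}. -/

import Mathlib

open MeasureTheory Set Pointwise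

/-- The dyadic interval of scale `r > 0` with index `k`, i.e. `[k·r, (k+1)·r)`. -/
def dyI (r : ℝ) (k : ℤ) : Set ℝ := Set.Ico ((k : ℝ) * r) (((k : ℝ) + 1) * r)

/-- The covering number `|E|_r`: the number of dyadic intervals of side length `r`
needed to cover `E` (equivalently, meeting `E`). -/
noncomputable def cov (r : ℝ) (E : Set ℝ) : ℕ := Nat.card {k : ℤ | (E ∩ dyI r k).Nonempty}

/-- The lattice `δ·ℤ`. -/
def lat (δ : ℝ) : Set ℝ := {x : ℝ | ∃ z : ℤ, x = δ * (z : ℝ)}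

/-- `A` is `(m, N)`-uniform with branching numbers `R`. -/
def uniform (m N : ℕ) (A : Set ℝ) (R : ℕ → ℕ) : Prop :=
  ∀ s : ℕ, s < N → ∀ k : ℤ, (A ∩ dyI ((2:ℝ) ^ (-(m * s : ℤ))) k).Nonempty →
    cov ((2:ℝ) ^ (-(m * (s + 1) : ℤ))) (A ∩ dyI ((2:ℝ) ^ (-(m * s : ℤ))) k) = R s

/-- `(η, m, N)`-polarisation for branching numbers `RA`, `RB`. A single set `B` with
branching numbers `R` is `(η,m,N)`-polarised iff `polarised η m N R R`. -/
def polarised (η : ℝ) (m N : ℕ) (RA RB : ℕ → ℕ) : Prop :=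
  ∀ s : ℕ, s < N → 1 < RB s → (2:ℝ) ^ ((1 - η) * (m : ℝ)) ≤ (RA s : ℝ)

noncomputable def idxx (m t : ℕ) (x : ℝ) : ℤ := ⌊x * (2:ℝ)^(m*t)⌋

/-- children of node `k` at level `t` -/
def chS (B : Set ℝ) (m t : ℕ) (k : ℤ) : Set ℤ := idxx m (t+1) '' {x ∈ B | idxx m t x = k}

/-- `j` is a selected child of `k` -/
def selP (B : Set ℝ) (m t : ℕ) (k j : ℤ) : Prop :=
  Odd ((chS B m t k ∩ {i | i ≤ j}).ncard)

/-- the pruned set -/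
def keep (B : Set ℝ) (m L : ℕ) : Set ℝ :=
  {x ∈ B | ∀ t, t < L → selP B m t (idxx m t x) (idxx m (t+1) x)}


lemma cnt_main : ∀ n (S : Finset ℤ), S.card = n →
    (S.filter (fun j => Odd ((S.filter (· ≤ j)).card))).card = (n+1)/2 ∧
    (S.filter (fun j => Even ((S.filter (· ≤ j)).card))).card = n/2 := by
  intro n
  induction n with
  | zero =>
    intro S hS
    rw [Finset.card_eq_zero] at hS
    subst hS
    simp
  | succ n ih =>
    intro S hS
    have hne : S.Nonempty := by rw [← Finset.card_pos, hS]; omega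
    set a := S.min' hne with ha
    have haS : a ∈ S := S.min'_mem hne
    set T := S.erase a with hT
    have haT : a ∉ T := Finset.notMem_erase a S
    have hTcard : T.card = n := by
      rw [hT, Finset.card_erase_of_mem haS, hS]
      omega
    obtain ⟨ih1, ih2⟩ := ih T hTcard
    have hSins : S = insert a T := by
      rw [hT, Finset.insert_erase haS]
    have hcnta : (S.filter (· ≤ a)).card = 1 := by
      have : S.filter (· ≤ a) = {a} := by
        ext i
        simp only [Finset.mem_filter, Finset.mem_singleton]
        constructor
        · rintro ⟨hiS, hile⟩
          exact le_antisymm hile (S.min'_le i hiS)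
        · rintro rfl; exact ⟨haS, le_refl _⟩
      rw [this, Finset.card_singleton]
    have hkey : ∀ j ∈ T, (S.filter (· ≤ j)).card = (T.filter (· ≤ j)).card + 1 := by
      intro j hjT
      have hjS : j ∈ S := Finset.mem_of_mem_erase hjT
      have : S.filter (· ≤ j) = insert a (T.filter (· ≤ j)) := by
        ext i
        simp only [Finset.mem_filter, Finset.mem_insert, hT, Finset.mem_erase]
        constructor
        · rintro ⟨hiS, hile⟩
          by_cases hia : i = a
          · left; exact hia
          · right; exact ⟨⟨hia, hiS⟩, hile⟩
        · rintro (rfl | ⟨⟨hia, hiS⟩, hile⟩)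
          · exact ⟨haS, S.min'_le j hjS⟩
          · exact ⟨hiS, hile⟩
      rw [this, Finset.card_insert_of_notMem (fun hmem => haT (Finset.mem_filter.mp hmem).1)]
    constructor
    · have : S.filter (fun j => Odd ((S.filter (· ≤ j)).card))
          = insert a (T.filter (fun j => Even ((T.filter (· ≤ j)).card))) := by
        ext i
        simp only [Finset.mem_filter, Finset.mem_insert]
        constructor
        · rintro ⟨hiS, hodd⟩
          by_cases hia : i = a
          · left; exact hia
          · right
            have hiT : i ∈ T := by rw [hT]; exact Finset.mem_erase.mpr ⟨hia, hiS⟩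
            refine ⟨hiT, ?_⟩
            rw [hkey i hiT, Nat.odd_add_one, Nat.not_odd_iff_even] at hodd
            exact hodd
        · rintro (rfl | ⟨hiT, heven⟩)
          · exact ⟨haS, by rw [hcnta]; exact odd_one⟩
          · refine ⟨Finset.mem_of_mem_erase hiT, ?_⟩
            rw [hkey i hiT, Nat.odd_add_one, Nat.not_odd_iff_even]
            exact heven
      rw [this, Finset.card_insert_of_notMem (fun hmem => haT (Finset.mem_filter.mp hmem).1),
        ih2]
      omega
    · have : S.filter (fun j => Even ((S.filter (· ≤ j)).card))
          = T.filter (fun j => Odd ((T.filter (· ≤ j)).card)) := by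
        ext i
        simp only [Finset.mem_filter]
        constructor
        · rintro ⟨hiS, heven⟩
          by_cases hia : i = a
          · subst hia
            rw [hcnta] at heven
            simp at heven
          · have hiT : i ∈ T := by rw [hT]; exact Finset.mem_erase.mpr ⟨hia, hiS⟩
            refine ⟨hiT, ?_⟩
            rw [hkey i hiT, Nat.even_add_one, Nat.not_even_iff_odd] at heven
            exact heven
        · rintro ⟨hiT, hodd⟩
          refine ⟨Finset.mem_of_mem_erase hiT, ?_⟩
          rw [hkey i hiT, Nat.even_add_one, Nat.not_even_iff_odd]
          exact hodd
      rw [this, ih1]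

lemma cnt_gap (S : Finset ℤ) {j j' : ℤ} (hj' : j' ∈ S)
    (oj : Odd ((S.filter (· ≤ j)).card)) (oj' : Odd ((S.filter (· ≤ j')).card))
    (h : j < j') : j + 2 ≤ j' := by
  by_contra hcon
  have hjj : j' = j + 1 := by omega
  have : S.filter (· ≤ j') = insert j' (S.filter (· ≤ j)) := by
    ext i
    simp only [Finset.mem_filter, Finset.mem_insert]
    constructor
    · rintro ⟨hiS, hile⟩
      by_cases hij : i = j'
      · left; exact hij
      · right; exact ⟨hiS, by omega⟩
    · rintro (rfl | ⟨hiS, hile⟩)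
      · exact ⟨hj', le_refl _⟩
      · exact ⟨hiS, by omega⟩
  rw [this, Finset.card_insert_of_notMem (fun hmem => by
    have := (Finset.mem_filter.mp hmem).2
    omega)] at oj'
  rw [Nat.odd_add_one, Nat.not_odd_iff_even] at oj'
  rw [Nat.odd_iff] at oj
  rw [Nat.even_iff] at oj'
  omega

section bridge

lemma cnt_bridge {C : Set ℤ} (hch : C.Finite) (j : ℤ) :
    (C ∩ {i | i ≤ j}).ncard = (hch.toFinset.filter (· ≤ j)).card := by
  rw [← Set.ncard_coe_finset]
  congr 1
  ext i
  simp [Set.mem_inter_iff, hch.mem_toFinset]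

lemma sel_card {C : Set ℤ} (hch : C.Finite) :
    {j ∈ C | Odd ((C ∩ {i | i ≤ j}).ncard)}.ncard = (C.ncard + 1)/2 := by
  classical
  have h1 : {j ∈ C | Odd ((C ∩ {i | i ≤ j}).ncard)}
      = ↑(hch.toFinset.filter (fun j => Odd ((hch.toFinset.filter (· ≤ j)).card))) := by
    ext j
    simp only [Set.mem_setOf_eq, Finset.coe_filter, hch.mem_toFinset, cnt_bridge hch]
  rw [h1, Set.ncard_coe_finset, (cnt_main hch.toFinset.card hch.toFinset rfl).1]
  congr 2
  rw [← Set.ncard_coe_finset, hch.coe_toFinset]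

lemma sel_gap {C : Set ℤ} (hch : C.Finite) {j j' : ℤ} (hj' : j' ∈ C)
    (oj : Odd ((C ∩ {i | i ≤ j}).ncard)) (oj' : Odd ((C ∩ {i | i ≤ j'}).ncard))
    (h : j < j') : j + 2 ≤ j' := by
  rw [cnt_bridge hch] at oj oj'
  exact cnt_gap hch.toFinset (hch.mem_toFinset.mpr hj') oj oj' h

lemma sel_nonempty {C : Set ℤ} (hch : C.Finite) (hne : C.Nonempty) :
    ∃ j ∈ C, Odd ((C ∩ {i | i ≤ j}).ncard) := by
  have h := sel_card hch
  have hc : 0 < C.ncard := (Set.ncard_pos hch).mpr hne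
  have : {j ∈ C | Odd ((C ∩ {i | i ≤ j}).ncard)}.Nonempty := by
    rw [← Set.ncard_pos (by exact (hch.subset (Set.sep_subset _ _)))]
    omega
  obtain ⟨j, hj1, hj2⟩ := this
  exact ⟨j, hj1, hj2⟩

end bridge

lemma mem_dyI_iff {m t : ℕ} {x : ℝ} {k : ℤ} :
    x ∈ dyI ((2:ℝ) ^ (-(m * t : ℤ))) k ↔ idxx m t x = k := by
  have h2 : ((2:ℝ) ^ (-(m * t : ℤ))) = ((2:ℝ)^(m*t))⁻¹ := by
    rw [zpow_neg]; norm_cast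
  have hp : (0:ℝ) < (2:ℝ)^(m*t) := by positivity
  rw [dyI, Set.mem_Ico, h2]
  constructor
  · rintro ⟨h1, h2'⟩
    rw [inv_eq_one_div, mul_one_div, div_le_iff₀ hp] at h1
    rw [inv_eq_one_div, mul_one_div, lt_div_iff₀ hp] at h2'
    exact Int.floor_eq_iff.mpr ⟨h1, h2'⟩
  · intro h
    subst h
    have f1 := Int.floor_le (x * (2:ℝ)^(m*t))
    have f2 := Int.lt_floor_add_one (x * (2:ℝ)^(m*t))
    constructor
    · rw [inv_eq_one_div, mul_one_div, div_le_iff₀ hp]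
      exact f1
    · rw [inv_eq_one_div, mul_one_div, lt_div_iff₀ hp]
      exact f2

lemma cov_eq_ncard_image (m t : ℕ) (E : Set ℝ) :
    cov ((2:ℝ) ^ (-(m * t : ℤ))) E = (idxx m t '' E).ncard := by
  have h : {k : ℤ | (E ∩ dyI ((2:ℝ) ^ (-(m * t : ℤ))) k).Nonempty} = idxx m t '' E := by
    ext k
    simp only [Set.mem_setOf_eq, Set.mem_image]
    constructor
    · rintro ⟨x, hxE, hxd⟩
      exact ⟨x, hxE, mem_dyI_iff.mp hxd⟩
    · rintro ⟨x, hxE, hk⟩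
      exact ⟨x, hxE, mem_dyI_iff.mpr hk⟩
  rw [cov, h, Nat.card_coe_set_eq]

/-- sandwich: ancestor index bounds -/
lemma idxx_sandwich (m : ℕ) {u t : ℕ} (hut : u ≤ t) (x : ℝ) :
    idxx m u x * 2^(m*(t-u)) ≤ idxx m t x ∧ idxx m t x < (idxx m u x + 1) * 2^(m*(t-u)) := by
  have hD : (0:ℝ) < (2:ℝ)^(m*(t-u)) := by positivity
  obtain ⟨d, rfl⟩ := Nat.exists_eq_add_of_le hut
  have hsplit : x * (2:ℝ)^(m*(u+d)) = x * (2:ℝ)^(m*u) * (2:ℝ)^(m*((u+d)-u)) := by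
    have e1 : u + d - u = d := by omega
    rw [mul_assoc, ← pow_add, e1]
    ring_nf
  have f1 := Int.floor_le (x * (2:ℝ)^(m*u))
  have f2 := Int.lt_floor_add_one (x * (2:ℝ)^(m*u))
  unfold idxx
  constructor
  · rw [Int.le_floor]
    push_cast
    rw [hsplit]
    exact mul_le_mul_of_nonneg_right f1 hD.le
  · rw [Int.floor_lt]
    push_cast
    rw [hsplit]
    exact mul_lt_mul_of_pos_right f2 hD

/-- the index at a coarser level is determined by the index at a finer level -/
lemma idxx_det (m : ℕ) {u t : ℕ} (hut : u ≤ t) {x y : ℝ} (h : idxx m t x = idxx m t y) :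
    idxx m u x = idxx m u y := by
  obtain ⟨a1, a2⟩ := idxx_sandwich m hut x
  obtain ⟨b1, b2⟩ := idxx_sandwich m hut y
  rw [h] at a1 a2
  by_contra hne
  rcases lt_or_gt_of_ne hne with hlt | hlt
  · have : idxx m u x + 1 ≤ idxx m u y := hlt
    nlinarith [pow_pos (by norm_num : (0:ℤ) < 2) (m*(t-u))]
  · have : idxx m u y + 1 ≤ idxx m u x := hlt
    nlinarith [pow_pos (by norm_num : (0:ℤ) < 2) (m*(t-u))]

section core

variable {B : Set ℝ} {m L : ℕ}

lemma keep_subset : keep B m L ⊆ B := fun x hx => hx.1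

lemma sep_eq_inter (t : ℕ) (k : ℤ) :
    {x ∈ B | idxx m t x = k} = B ∩ dyI ((2:ℝ) ^ (-(m * t : ℤ))) k := by
  ext x
  simp only [Set.mem_setOf_eq, Set.mem_inter_iff, mem_dyI_iff]

lemma chS_finite (hfin : B.Finite) (t : ℕ) (k : ℤ) : (chS B m t k).Finite :=
  (hfin.subset (fun _ hx => hx.1)).image _

/-- extension: any point whose rank-conditions hold below level t' can be completed -/
lemma keep_ext (hfin : B.Finite) :
    ∀ d t', t' + d = L → ∀ x, x ∈ B →
      (∀ u, u < t' → selP B m u (idxx m u x) (idxx m (u+1) x)) →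
      ∃ y ∈ keep B m L, idxx m t' y = idxx m t' x := by
  intro d
  induction d with
  | zero =>
    intro t' ht' x hxB hcond
    refine ⟨x, ⟨hxB, ?_⟩, rfl⟩
    intro t ht
    exact hcond t (by omega)
  | succ d ih =>
    intro t' ht' x hxB hcond
    have hch := chS_finite (m := m) hfin t' (idxx m t' x)
    have hne : (chS B m t' (idxx m t' x)).Nonempty :=
      ⟨idxx m (t'+1) x, ⟨x, ⟨hxB, rfl⟩, rfl⟩⟩
    obtain ⟨j, hjC, hjodd⟩ := sel_nonempty hch hne
    obtain ⟨z, ⟨hzB, hzt⟩, hzj⟩ := hjC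
    have hzcond : ∀ u, u < t' + 1 → selP B m u (idxx m u z) (idxx m (u+1) z) := by
      intro u hu
      rcases Nat.lt_or_ge u t' with hu' | hu'
      · have e1 : idxx m u z = idxx m u x := idxx_det m (by omega) hzt
        have e2 : idxx m (u+1) z = idxx m (u+1) x := idxx_det m (by omega) hzt
        rw [e1, e2]
        exact hcond u hu'
      · have : u = t' := by omega
        subst this
        rw [hzt, hzj]
        exact hjodd
    obtain ⟨y, hyK, hyt⟩ := ih (t'+1) (by omega) z hzB hzcond
    refine ⟨y, hyK, ?_⟩
    have := idxx_det m (Nat.le_succ t') hyt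
    rw [this, hzt]

lemma keep_children (hfin : B.Finite) {t : ℕ} (ht : t < L) {k : ℤ}
    (hne : (keep B m L ∩ dyI ((2:ℝ) ^ (-(m * t : ℤ))) k).Nonempty) :
    idxx m (t+1) '' (keep B m L ∩ dyI ((2:ℝ) ^ (-(m * t : ℤ))) k)
      = {j ∈ chS B m t k | selP B m t k j} := by
  obtain ⟨x₀, hx₀K, hx₀d⟩ := hne
  have hx₀k : idxx m t x₀ = k := mem_dyI_iff.mp hx₀d
  ext j
  constructor
  · rintro ⟨x, ⟨hxK, hxd⟩, rfl⟩
    have hxk : idxx m t x = k := mem_dyI_iff.mp hxd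
    refine ⟨⟨x, ⟨hxK.1, hxk⟩, rfl⟩, ?_⟩
    have := hxK.2 t ht
    rw [hxk] at this
    exact this
  · rintro ⟨⟨z, ⟨hzB, hzt⟩, hzj⟩, hsel⟩
    have hzcond : ∀ u, u < t + 1 → selP B m u (idxx m u z) (idxx m (u+1) z) := by
      intro u hu
      rcases Nat.lt_or_ge u t with hu' | hu'
      · have e0 : idxx m t z = idxx m t x₀ := by rw [hzt, hx₀k]
        have e1 : idxx m u z = idxx m u x₀ := idxx_det m (by omega) e0
        have e2 : idxx m (u+1) z = idxx m (u+1) x₀ := idxx_det m (by omega) e0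
        rw [e1, e2]
        exact hx₀K.2 u (by omega)
      · have : u = t := by omega
        subst this
        rw [hzt, hzj]
        exact hsel
    obtain ⟨y, hyK, hyt⟩ := keep_ext (L := L) hfin (L - (t+1)) (t+1) (by omega) z hzB hzcond
    refine ⟨y, ⟨hyK, ?_⟩, by rw [hyt, hzj]⟩
    rw [mem_dyI_iff]
    have := idxx_det m (Nat.le_succ t) hyt
    rw [this, hzt]

end core

section core2

variable {B : Set ℝ} {m L : ℕ}

lemma keep_uniform (hfin : B.Finite) (R1 : ℕ → ℕ) (hu1 : uniform m L B R1) :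
    uniform m L (keep B m L) (fun s => (R1 s + 1)/2) := by
  intro s hs k hne
  have hcast : ((m:ℤ) * ((s:ℤ)+1)) = ((m:ℤ) * (((s+1:ℕ)):ℤ)) := by push_cast; ring
  rw [hcast, cov_eq_ncard_image m (s+1), keep_children hfin hs hne]
  have hBne : (B ∩ dyI ((2:ℝ) ^ (-(m * s : ℤ))) k).Nonempty := by
    obtain ⟨x, hx1, hx2⟩ := hne
    exact ⟨x, hx1.1, hx2⟩
  have hchval : (chS B m s k).ncard = R1 s := by
    have h1 : chS B m s k = idxx m (s+1) '' (B ∩ dyI ((2:ℝ) ^ (-(m * s : ℤ))) k) := by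
      rw [chS, sep_eq_inter]
    have h2 := hu1 s hs k hBne
    rw [hcast, cov_eq_ncard_image m (s+1)] at h2
    rw [h1, h2]
  have := sel_card (chS_finite (m := m) hfin s k)
  simp only [selP]
  rw [this, hchval]

lemma keep_sep (hfin : B.Finite) (hsub : B ⊆ Set.Ico 0 1) (hm1 : 1 ≤ m) :
    ∀ s, s ≤ L → ∀ k1 k2 : ℤ, k1 ≠ k2 →
    (keep B m L ∩ dyI ((2:ℝ)^(-(m*s:ℤ))) k1).Nonempty →
    (keep B m L ∩ dyI ((2:ℝ)^(-(m*s:ℤ))) k2).Nonempty → k1 + 2 ≤ k2 ∨ k2 + 2 ≤ k1 := by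
  intro s
  induction s with
  | zero =>
    intro _ k1 k2 hne h1 h2
    exfalso
    obtain ⟨x1, hx1K, hx1d⟩ := h1
    obtain ⟨x2, hx2K, hx2d⟩ := h2
    have e1 : idxx m 0 x1 = k1 := mem_dyI_iff.mp hx1d
    have e2 : idxx m 0 x2 = k2 := mem_dyI_iff.mp hx2d
    have z1 : idxx m 0 x1 = 0 := by
      rw [idxx]
      simp only [Nat.mul_zero, pow_zero, mul_one]
      have := hsub (keep_subset hx1K)
      rw [Int.floor_eq_zero_iff]
      exact ⟨this.1, this.2⟩
    have z2 : idxx m 0 x2 = 0 := by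
      rw [idxx]
      simp only [Nat.mul_zero, pow_zero, mul_one]
      have := hsub (keep_subset hx2K)
      rw [Int.floor_eq_zero_iff]
      exact ⟨this.1, this.2⟩
    rw [e1] at z1; rw [e2] at z2
    exact hne (z1.trans z2.symm)
  | succ s ih =>
    intro hsL k1 k2 hne h1 h2
    obtain ⟨x1, hx1K, hx1d⟩ := h1
    obtain ⟨x2, hx2K, hx2d⟩ := h2
    have e1 : idxx m (s+1) x1 = k1 := mem_dyI_iff.mp hx1d
    have e2 : idxx m (s+1) x2 = k2 := mem_dyI_iff.mp hx2d
    set p1 := idxx m s x1 with hp1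
    set p2 := idxx m s x2 with hp2
    have hsL' : s < L := by omega
    by_cases hp : p1 = p2
    · -- same parent: both selected children
      have c1 : k1 ∈ chS B m s p1 := ⟨x1, ⟨keep_subset hx1K, rfl⟩, e1⟩
      have c2 : k2 ∈ chS B m s p1 := by
        rw [hp]
        exact ⟨x2, ⟨keep_subset hx2K, rfl⟩, e2⟩
      have o1 : selP B m s p1 k1 := by
        have := hx1K.2 s hsL'
        rw [e1] at this
        exact this
      have o2 : selP B m s p1 k2 := by
        rw [hp, hp2]
        have h := hx2K.2 s hsL'
        rw [e2] at h
        exact h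
      have hchf := chS_finite (m := m) hfin s p1
      rcases lt_trichotomy k1 k2 with hlt | heq | hlt
      · left; exact sel_gap hchf c2 o1 o2 hlt
      · exact absurd heq hne
      · right; exact sel_gap hchf c1 o2 o1 hlt
    · -- different parents
      have hq1 : (keep B m L ∩ dyI ((2:ℝ)^(-(m*s:ℤ))) p1).Nonempty :=
        ⟨x1, hx1K, mem_dyI_iff.mpr rfl⟩
      have hq2 : (keep B m L ∩ dyI ((2:ℝ)^(-(m*s:ℤ))) p2).Nonempty :=
        ⟨x2, hx2K, mem_dyI_iff.mpr rfl⟩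
      have hgap := ih (by omega) p1 p2 hp hq1 hq2
      have hs1 := idxx_sandwich m (Nat.le_succ s) x1
      have hs2 := idxx_sandwich m (Nat.le_succ s) x2
      have hd : s + 1 - s = 1 := by omega
      rw [hd, mul_one] at hs1 hs2
      rw [e1] at hs1; rw [e2] at hs2
      have h2m : (2:ℤ) ≤ 2^m := by
        calc (2:ℤ) = 2^1 := (pow_one 2).symm
          _ ≤ 2^m := pow_le_pow_right₀ (by norm_num) hm1
      have hpow : (0:ℤ) < 2^m := by positivity
      rcases hgap with hg | hg
      · left
        nlinarith [hs1.2, hs2.1]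
      · right
        nlinarith [hs2.2, hs1.1]

end core2

section core3

variable {m : ℕ}

lemma tower (E : Set ℝ) (hE : E.Finite) (L' : ℕ) (S : ℕ → ℕ)
    (hu : ∀ u, u < L' → ∀ k : ℤ, (E ∩ dyI ((2:ℝ)^(-(m*u:ℤ))) k).Nonempty →
      (idxx m (u+1) '' (E ∩ dyI ((2:ℝ)^(-(m*u:ℤ))) k)).ncard = S u) :
    ∀ (t t' : ℕ), t ≤ t' → t' ≤ L' → ∀ k : ℤ, (E ∩ dyI ((2:ℝ)^(-(m*t:ℤ))) k).Nonempty →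
      (idxx m t' '' (E ∩ dyI ((2:ℝ)^(-(m*t:ℤ))) k)).ncard = ∏ u ∈ Finset.Ico t t', S u := by
  intro t t' h1
  induction t', h1 using Nat.le_induction with
  | base =>
    intro _ k hne
    rw [Finset.Ico_self, Finset.prod_empty]
    have him : idxx m t '' (E ∩ dyI ((2:ℝ)^(-(m*t:ℤ))) k) = {k} := by
      apply Set.eq_singleton_iff_nonempty_unique_mem.mpr
      constructor
      · exact hne.image _
      · rintro j ⟨x, ⟨_, hxd⟩, rfl⟩
        exact mem_dyI_iff.mp hxd
    rw [him, Set.ncard_singleton]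
  | succ t' ht' ih =>
    intro hL k hne
    classical
    have hT : (E ∩ dyI ((2:ℝ)^(-(m*t:ℤ))) k).Finite := hE.inter_of_left _
    set A := hT.toFinset with hA
    have hcoeA : (↑A : Set ℝ) = E ∩ dyI ((2:ℝ)^(-(m*t:ℤ))) k := hT.coe_toFinset
    -- decompose image
    have hdecomp : A.image (idxx m (t'+1)) = (A.image (idxx m t')).biUnion
        (fun j => (A.filter (fun x => idxx m t' x = j)).image (idxx m (t'+1))) := by
      ext i
      simp only [Finset.mem_image, Finset.mem_biUnion, Finset.mem_filter]
      constructor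
      · rintro ⟨x, hx, rfl⟩
        exact ⟨idxx m t' x, ⟨x, hx, rfl⟩, x, ⟨hx, rfl⟩, rfl⟩
      · rintro ⟨j, _, x, ⟨hx, _⟩, rfl⟩
        exact ⟨x, hx, rfl⟩
    have hdisj : ∀ j1 ∈ A.image (idxx m t'), ∀ j2 ∈ A.image (idxx m t'), j1 ≠ j2 →
        Disjoint ((A.filter (fun x => idxx m t' x = j1)).image (idxx m (t'+1)))
                 ((A.filter (fun x => idxx m t' x = j2)).image (idxx m (t'+1))) := by
      intro j1 _ j2 _ hne12
      rw [Finset.disjoint_left]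
      intro i hi1 hi2
      obtain ⟨x, hx, hxi⟩ := Finset.mem_image.mp hi1
      obtain ⟨y, hy, hyi⟩ := Finset.mem_image.mp hi2
      have : idxx m t' x = idxx m t' y := idxx_det m (Nat.le_succ t') (by rw [hxi, hyi])
      rw [(Finset.mem_filter.mp hx).2, (Finset.mem_filter.mp hy).2] at this
      exact hne12 this
    -- each fiber has cardinality S t'
    have hfiber : ∀ j ∈ A.image (idxx m t'),
        ((A.filter (fun x => idxx m t' x = j)).image (idxx m (t'+1))).card = S t' := by
      intro j hj
      obtain ⟨y, hyA, hyg⟩ := Finset.mem_image.mp hj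
      have hyT : y ∈ E ∩ dyI ((2:ℝ)^(-(m*t:ℤ))) k := by rw [← hcoeA]; exact hyA
      have hykey : idxx m t y = k := mem_dyI_iff.mp hyT.2
      have hset : (↑(A.filter (fun x => idxx m t' x = j)) : Set ℝ)
          = E ∩ dyI ((2:ℝ)^(-(m*t':ℤ))) j := by
        ext x
        simp only [Finset.coe_filter, Set.mem_setOf_eq, hA, hT.mem_toFinset, Set.mem_inter_iff]
        constructor
        · rintro ⟨hxT, hxg⟩
          exact ⟨hxT.1, mem_dyI_iff.mpr hxg⟩
        · rintro ⟨hxE, hxd⟩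
          have hxg : idxx m t' x = j := mem_dyI_iff.mp hxd
          refine ⟨⟨hxE, ?_⟩, hxg⟩
          rw [mem_dyI_iff]
          have h5 : idxx m t' x = idxx m t' y := by rw [hxg, hyg]
          have h6 := idxx_det m ht' h5
          rw [h6, hykey]
      have hne' : (E ∩ dyI ((2:ℝ)^(-(m*t':ℤ))) j).Nonempty := by
        rw [← hset]
        exact ⟨y, by simp only [Finset.coe_filter, Set.mem_setOf_eq, hA, hT.mem_toFinset]
                     exact ⟨hT.mem_toFinset.mp hyA, hyg⟩⟩
      have hc := hu t' (by omega) j hne'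
      rw [← hset, ← Finset.coe_image, Set.ncard_coe_finset] at hc
      exact hc
    -- assemble
    have hcardf : (A.image (idxx m (t'+1))).card = (A.image (idxx m t')).card * S t' := by
      rw [hdecomp, Finset.card_biUnion hdisj]
      rw [Finset.sum_congr rfl hfiber, Finset.sum_const, smul_eq_mul]
    have himg : (idxx m t' '' (E ∩ dyI ((2:ℝ)^(-(m*t:ℤ))) k)).ncard
        = (A.image (idxx m t')).card := by
      rw [← hcoeA, ← Finset.coe_image, Set.ncard_coe_finset]
    have himf : (idxx m (t'+1) '' (E ∩ dyI ((2:ℝ)^(-(m*t:ℤ))) k)).ncard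
        = (A.image (idxx m (t'+1))).card := by
      rw [← hcoeA, ← Finset.coe_image, Set.ncard_coe_finset]
    have hIH := ih (by omega) k hne
    rw [himf, hcardf, ← himg, hIH, Finset.prod_Ico_succ_top ht']

end core3

section core4

lemma uniform_image {B : Set ℝ} {m L : ℕ} {R : ℕ → ℕ} (h : uniform m L B R) :
    ∀ u, u < L → ∀ k : ℤ, (B ∩ dyI ((2:ℝ)^(-(m*u:ℤ))) k).Nonempty →
      (idxx m (u+1) '' (B ∩ dyI ((2:ℝ)^(-(m*u:ℤ))) k)).ncard = R u := by
  intro u hu k hk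
  have hc := h u hu k hk
  have hcast : ((m:ℤ) * ((u:ℤ)+1)) = ((m:ℤ) * (((u+1:ℕ)):ℤ)) := by push_cast; ring
  rw [hcast, cov_eq_ncard_image m (u+1)] at hc
  exact hc

lemma lat_fin {δ : ℝ} (hδ : 0 < δ) : (lat δ ∩ Set.Ico 0 1).Finite := by
  apply Set.Finite.subset ((Set.finite_Icc (0:ℤ) ⌈δ⁻¹⌉).image (fun z : ℤ => δ * z))
  rintro x ⟨⟨z, rfl⟩, hx0, hx1⟩
  refine ⟨z, ?_, rfl⟩
  rw [Set.mem_Icc]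
  constructor
  · by_contra hz
    push_neg at hz
    have : (z:ℝ) < 0 := by exact_mod_cast hz
    nlinarith
  · have h1 : (z:ℝ) < δ⁻¹ := by
      rw [← one_div]
      rw [lt_div_iff₀ hδ]
      nlinarith
    have h2 : (z:ℝ) ≤ ⌈δ⁻¹⌉ := le_trans h1.le (Int.le_ceil _)
    exact_mod_cast h2

lemma idxx_lat {m L : ℕ} {x : ℝ} {z : ℤ} (h : x = (2:ℝ)^(-((m*L:ℕ):ℤ)) * z) :
    idxx m L x = z := by
  have hkey : x * (2:ℝ)^(m*L) = (z:ℝ) := by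
    rw [h]
    have : (2:ℝ)^(-((m*L:ℕ):ℤ)) * (2:ℝ)^(m*L) = 1 := by
      rw [← zpow_natCast (2:ℝ) (m*L), ← zpow_add₀ (by norm_num : (2:ℝ) ≠ 0)]
      simp
    rw [mul_comm ((2:ℝ)^(-((m*L:ℕ):ℤ))) (z:ℝ), mul_assoc, this, mul_one]
  rw [idxx, hkey, Int.floor_intCast]

lemma idxx_zero {m : ℕ} {x : ℝ} (hx : x ∈ Set.Ico (0:ℝ) 1) : idxx m 0 x = 0 := by
  rw [idxx]
  simp only [Nat.mul_zero, pow_zero, mul_one]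
  rw [Int.floor_eq_zero_iff]
  exact ⟨hx.1, hx.2⟩

lemma subset_dyI_zero {B : Set ℝ} {m : ℕ} (hsub : B ⊆ Set.Ico 0 1) :
    B ∩ dyI ((2:ℝ)^(-(m*(0:ℕ):ℤ))) 0 = B := by
  apply Set.inter_eq_self_of_subset_left
  intro x hx
  exact mem_dyI_iff.mpr (idxx_zero (hsub hx))

end core4


/-- **Proposition (pruning for separation).**
Let `η ∈ (0,1)`, `ℓ, m, N ∈ ℕ` with `m ≥ 2/η`, and `δ = 2^{−ℓmN}`. Let `B′ ⊂ [0,1)` be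
a `δ`-set which is `(m, ℓN)`-uniform and `(η/2, ℓm, N)`-polarised. Then there exists
`B″ ⊂ B′` which is `(m, ℓN)`-uniform and `(η, ℓm, N)`-polarised, with
`|B″| ≥ δ^{η/2} |B′|`, such that for every `s ∈ {0,…,ℓN−1}`, distinct dyadic intervals
of length `2^{−ms}` intersecting `B″` are at distance `≥ 2^{−ms}`. -/
theorem prop2 (η : ℝ) (hη : η ∈ Set.Ioo (0:ℝ) 1) (ℓ m N : ℕ) (hm : 2 / η ≤ (m : ℝ))
    (δ : ℝ) (hδ : δ = (2:ℝ) ^ (-(ℓ * m * N : ℤ)))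
    (B' : Set ℝ) (hB' : B' ⊆ lat δ ∩ Set.Ico 0 1)
    (R1 : ℕ → ℕ) (hu1 : uniform m (ℓ * N) B' R1)
    (R2 : ℕ → ℕ) (hu2 : uniform (ℓ * m) N B' R2)
    (hpol : polarised (η / 2) (ℓ * m) N R2 R2) :
    ∃ B'' : Set ℝ, B'' ⊆ B' ∧
      (∃ R1' : ℕ → ℕ, uniform m (ℓ * N) B'' R1') ∧
      (∃ R2' : ℕ → ℕ, uniform (ℓ * m) N B'' R2' ∧ polarised η (ℓ * m) N R2' R2') ∧
      δ ^ (η / 2) * (B'.ncard : ℝ) ≤ (B''.ncard : ℝ) ∧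
      (∀ s : ℕ, s < ℓ * N → ∀ k₁ k₂ : ℤ, k₁ ≠ k₂ →
        (B'' ∩ dyI ((2:ℝ) ^ (-(m * s : ℤ))) k₁).Nonempty →
        (B'' ∩ dyI ((2:ℝ) ^ (-(m * s : ℤ))) k₂).Nonempty →
        ∀ x ∈ dyI ((2:ℝ) ^ (-(m * s : ℤ))) k₁, ∀ y ∈ dyI ((2:ℝ) ^ (-(m * s : ℤ))) k₂,
          (2:ℝ) ^ (-(m * s : ℤ)) ≤ |x - y|) := by
  obtain ⟨hη0, hη1⟩ := hη
  have hmη : 2 ≤ (m:ℝ) * η := by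
    rw [div_le_iff₀ hη0] at hm
    linarith
  have hm1 : 1 ≤ m := by
    by_contra h
    push_neg at h
    interval_cases m
    · simp at hmη
      nlinarith
  have hδpos : 0 < δ := by rw [hδ]; positivity
  set L := ℓ * N with hLdef
  have hδL : δ = (2:ℝ)^(-((m*L:ℕ):ℤ)) := by
    rw [hδ, hLdef]
    congr 1
    push_cast
    ring
  rcases Set.eq_empty_or_nonempty B' with hBe | hBne
  · subst hBe
    exact ⟨∅, Set.empty_subset _, ⟨R1, fun s hs k hk => absurd hk (by simp)⟩,
      ⟨fun _ => 0, fun s hs k hk => absurd hk (by simp), by intro s hs h10; simp at h10⟩,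
      by simp, fun s hs k1 k2 hne h1 h2 => absurd h1 (by simp)⟩
  have hfin : B'.Finite := (lat_fin hδpos).subset hB'
  have hsub01 : B' ⊆ Set.Ico 0 1 := fun x hx => (hB' hx).2
  set K := keep B' m L with hKdef
  have hKsub : K ⊆ B' := keep_subset
  have hKfin : K.Finite := hfin.subset hKsub
  have hKne : K.Nonempty := by
    obtain ⟨x, hx⟩ := hBne
    obtain ⟨y, hyK, _⟩ := keep_ext (L := L) hfin L 0 (by omega) x hx
      (fun u hu => absurd hu (by omega))
    exact ⟨y, hyK⟩
  set R1' : ℕ → ℕ := fun s => (R1 s + 1)/2 with hR1'def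
  have hKu : uniform m L K R1' := keep_uniform hfin R1 hu1
  have hBuim := uniform_image hu1
  have hKuim := uniform_image hKu
  have htowB := tower (m := m) B' hfin L R1 hBuim
  have htowK := tower (m := m) K hKfin L R1' hKuim
  have hR1pos : ∀ u, u < L → 1 ≤ R1 u := by
    intro u hu
    obtain ⟨x, hx⟩ := hBne
    have hne1 : (B' ∩ dyI ((2:ℝ)^(-(m*u:ℤ))) (idxx m u x)).Nonempty :=
      ⟨x, hx, mem_dyI_iff.mpr rfl⟩
    have := hBuim u hu (idxx m u x) hne1
    rw [← this]
    have : (idxx m (u+1) '' (B' ∩ dyI ((2:ℝ)^(-(m*u:ℤ))) (idxx m u x))).Nonempty :=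
      hne1.image _
    have hfin' : (idxx m (u+1) '' (B' ∩ dyI ((2:ℝ)^(-(m*u:ℤ))) (idxx m u x))).Finite :=
      (hfin.inter_of_left _).image _
    have := (Set.ncard_pos hfin').mpr this
    omega
  -- scale conversion equations
  have he1 : ∀ s : ℕ, (-((ℓ*m : ℕ) * (s:ℤ))) = (-((m:ℤ) * ((ℓ*s : ℕ):ℤ))) := by
    intro s; push_cast; ring
  have he2 : ∀ s : ℕ, (-(((ℓ*m : ℕ):ℤ) * ((s:ℤ)+1))) = (-((m:ℤ) * ((ℓ*(s+1) : ℕ):ℤ))) := by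
    intro s; push_cast; ring
  -- the block products
  set R2' : ℕ → ℕ := fun s => ∏ u ∈ Finset.Ico (ℓ*s) (ℓ*(s+1)), R1' u with hR2'def
  have hblockL : ∀ s, s < N → ℓ*(s+1) ≤ L := by
    intro s hs
    rw [hLdef]
    exact Nat.mul_le_mul_left ℓ hs
  have hKu2 : uniform (ℓ*m) N K R2' := by
    intro s hs k hk
    rw [he1 s] at hk
    rw [he1 s, he2 s, cov_eq_ncard_image m (ℓ*(s+1))]
    exact htowK (ℓ*s) (ℓ*(s+1)) (Nat.mul_le_mul_left ℓ (Nat.le_succ s)) (hblockL s hs) k hk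
  have hR2eq : ∀ s, s < N → R2 s = ∏ u ∈ Finset.Ico (ℓ*s) (ℓ*(s+1)), R1 u := by
    intro s hs
    obtain ⟨x, hx⟩ := hBne
    have hne1 : (B' ∩ dyI ((2:ℝ)^(-(m*(ℓ*s):ℤ))) (idxx m (ℓ*s) x)).Nonempty :=
      ⟨x, hx, mem_dyI_iff.mpr rfl⟩
    have h := hu2 s hs (idxx m (ℓ*s) x) (by rw [he1 s]; exact hne1)
    rw [he1 s, he2 s, cov_eq_ncard_image m (ℓ*(s+1))] at h
    rw [← h]
    exact htowB (ℓ*s) (ℓ*(s+1)) (Nat.mul_le_mul_left ℓ (Nat.le_succ s)) (hblockL s hs)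
      (idxx m (ℓ*s) x) hne1
  have hpol' : polarised η (ℓ*m) N R2' R2' := by
    intro s hs h1'
    have hblock_lt : ∀ u ∈ Finset.Ico (ℓ*s) (ℓ*(s+1)), u < L := by
      intro u hu
      exact lt_of_lt_of_le (Finset.mem_Ico.mp hu).2 (hblockL s hs)
    have hle1 : R2' s ≤ R2 s := by
      rw [hR2eq s hs, hR2'def]
      apply Finset.prod_le_prod'
      intro u hu
      have := hR1pos u (hblock_lt u hu)
      simp only [hR1'def]
      omega
    have h1R2 : 1 < R2 s := lt_of_lt_of_le h1' hle1
    have hp := hpol s hs h1R2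
    have hfac : (R2 s : ℝ) ≤ (2:ℝ)^ℓ * (R2' s : ℝ) := by
      have hnat : R2 s ≤ 2^ℓ * R2' s := by
        rw [hR2eq s hs, hR2'def]
        calc ∏ u ∈ Finset.Ico (ℓ*s) (ℓ*(s+1)), R1 u
            ≤ ∏ u ∈ Finset.Ico (ℓ*s) (ℓ*(s+1)), (2 * R1' u) := by
              apply Finset.prod_le_prod'
              intro u _
              simp only [hR1'def]
              omega
          _ = 2^ℓ * ∏ u ∈ Finset.Ico (ℓ*s) (ℓ*(s+1)), R1' u := by
              rw [Finset.prod_mul_distrib, Finset.prod_const, Nat.card_Ico]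
              congr 2
              rw [Nat.mul_succ]
              omega
      calc (R2 s : ℝ) ≤ ((2^ℓ * R2' s : ℕ) : ℝ) := by exact_mod_cast hnat
        _ = (2:ℝ)^ℓ * (R2' s : ℝ) := by push_cast; ring
    have hkey : (2:ℝ)^((1-η) * ((ℓ*m : ℕ):ℝ)) * (2:ℝ)^ℓ ≤ (2:ℝ)^((1-η/2) * ((ℓ*m : ℕ):ℝ)) := by
      rw [← Real.rpow_natCast 2 ℓ, ← Real.rpow_add (by norm_num)]
      apply Real.rpow_le_rpow_of_exponent_le (by norm_num)
      push_cast
      nlinarith [Nat.cast_nonneg (α := ℝ) ℓ, Nat.cast_nonneg (α := ℝ) N]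
    have h2l : (0:ℝ) < (2:ℝ)^ℓ := by positivity
    have := le_trans hkey (le_trans hp hfac)
    have h' : (2:ℝ)^((1-η) * ((ℓ*m : ℕ):ℝ)) * (2:ℝ)^ℓ ≤ (R2' s : ℝ) * (2:ℝ)^ℓ := by
      linarith
    exact le_of_mul_le_mul_right h' h2l
  -- cardinality
  have hinj : Set.InjOn (idxx m L) B' := by
    intro x hx y hy hxy
    obtain ⟨zx, hzx⟩ := (hB' hx).1
    obtain ⟨zy, hzy⟩ := (hB' hy).1
    rw [hδL] at hzx hzy
    have ex := idxx_lat hzx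
    have ey := idxx_lat hzy
    rw [hzx, hzy, ← ex, ← ey, hxy]
  have h0B : B' ∩ dyI ((2:ℝ)^(-(m*(0:ℕ):ℤ))) 0 = B' := subset_dyI_zero hsub01
  have h0K : K ∩ dyI ((2:ℝ)^(-(m*(0:ℕ):ℤ))) 0 = K :=
    subset_dyI_zero (fun x hx => hsub01 (hKsub hx))
  have hBcard : B'.ncard = ∏ u ∈ Finset.Ico 0 L, R1 u := by
    have ht := htowB 0 L (Nat.zero_le L) (le_refl L) 0 (by rw [h0B]; exact hBne)
    rw [h0B, Set.ncard_image_of_injOn hinj] at ht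
    exact ht
  have hKcard : K.ncard = ∏ u ∈ Finset.Ico 0 L, R1' u := by
    have ht := htowK 0 L (Nat.zero_le L) (le_refl L) 0 (by rw [h0K]; exact hKne)
    rw [h0K, Set.ncard_image_of_injOn (hinj.mono hKsub)] at ht
    exact ht
  have hcard : δ ^ (η/2) * (B'.ncard : ℝ) ≤ (K.ncard : ℝ) := by
    rw [hBcard, hKcard]
    have hnat : ∏ u ∈ Finset.Ico 0 L, R1 u ≤ 2^L * ∏ u ∈ Finset.Ico 0 L, R1' u := by
      calc ∏ u ∈ Finset.Ico 0 L, R1 u ≤ ∏ u ∈ Finset.Ico 0 L, (2 * R1' u) := by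
            apply Finset.prod_le_prod'
            intro u _
            simp only [hR1'def]
            omega
        _ = 2^L * ∏ u ∈ Finset.Ico 0 L, R1' u := by
            rw [Finset.prod_mul_distrib, Finset.prod_const, Nat.card_Ico, Nat.sub_zero]
    have hδe : δ ^ (η/2) ≤ (2:ℝ) ^ (-(L:ℝ)) := by
      rw [hδL, ← Real.rpow_intCast 2 (-((m*L:ℕ):ℤ)), ← Real.rpow_mul (by norm_num : (0:ℝ) ≤ 2)]
      apply Real.rpow_le_rpow_of_exponent_le (by norm_num)
      push_cast
      nlinarith [hmη, Nat.cast_nonneg (α := ℝ) L, hη0.le]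
    calc δ^(η/2) * ((∏ u ∈ Finset.Ico 0 L, R1 u : ℕ) : ℝ)
        ≤ (2:ℝ)^(-(L:ℝ)) * ((2^L * ∏ u ∈ Finset.Ico 0 L, R1' u : ℕ) : ℝ) := by
          apply mul_le_mul hδe (by exact_mod_cast hnat) (Nat.cast_nonneg _)
            (Real.rpow_nonneg (by norm_num) _)
      _ = ((∏ u ∈ Finset.Ico 0 L, R1' u : ℕ) : ℝ) := by
          push_cast
          rw [← Real.rpow_natCast 2 L, ← mul_assoc, ← Real.rpow_add (by norm_num)]
          simp
  -- separation
  have hsep : ∀ s : ℕ, s < L → ∀ k1 k2 : ℤ, k1 ≠ k2 →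
      (K ∩ dyI ((2:ℝ) ^ (-(m * s : ℤ))) k1).Nonempty →
      (K ∩ dyI ((2:ℝ) ^ (-(m * s : ℤ))) k2).Nonempty →
      ∀ x ∈ dyI ((2:ℝ) ^ (-(m * s : ℤ))) k1, ∀ y ∈ dyI ((2:ℝ) ^ (-(m * s : ℤ))) k2,
        (2:ℝ) ^ (-(m * s : ℤ)) ≤ |x - y| := by
    intro s hs k1 k2 hne h1 h2 x hx y hy
    have hgap := keep_sep (L := L) hfin hsub01 hm1 s (le_of_lt hs) k1 k2 hne h1 h2
    have hr : (0:ℝ) < (2:ℝ) ^ (-(m * s : ℤ)) := by positivity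
    obtain ⟨hx1, hx2⟩ := hx
    obtain ⟨hy1, hy2⟩ := hy
    rcases hgap with hg | hg
    · have hgr : ((k1:ℝ) + 2) ≤ (k2:ℝ) := by exact_mod_cast hg
      have hyx : (2:ℝ) ^ (-(m * s : ℤ)) ≤ y - x := by
        nlinarith [mul_nonneg (by linarith : (0:ℝ) ≤ (k2:ℝ) - ((k1:ℝ)+2)) hr.le]
      calc (2:ℝ) ^ (-(m * s : ℤ)) ≤ y - x := hyx
        _ ≤ |x - y| := by rw [abs_sub_comm]; exact le_abs_self _
    · have hgr : ((k2:ℝ) + 2) ≤ (k1:ℝ) := by exact_mod_cast hg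
      have hxy : (2:ℝ) ^ (-(m * s : ℤ)) ≤ x - y := by
        nlinarith [mul_nonneg (by linarith : (0:ℝ) ≤ (k1:ℝ) - ((k2:ℝ)+2)) hr.le]
      calc (2:ℝ) ^ (-(m * s : ℤ)) ≤ x - y := hxy
        _ ≤ |x - y| := le_abs_self _
  exact ⟨K, hKsub, ⟨R1', hKu⟩, ⟨R2', hKu2, hpol'⟩, hcard, hsep⟩
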